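/- arXiv:2308.15414 — 6 statements merged into one kernel-verified Lean document; each statement's English description precedes it below -/
import Mathlib

section
/- Let X be a Banach space, F a Banach lattice, and let (T_n) be a sequence of Dunford–Pettis L-weakly compact operators from X to F converging in operator norm to a bounded operator T : X → F. Then T is Dunford–Pettis L-weakly compact. -/
open Filter Topology

/-- A sequence of functionals converges to zero uniformly on a set `A`. -/
def UnifNullOn {X : Type*} [NormedAddCommGroup X] [NormedSpace ℝ X]
    (f : ℕ → X →L[ℝ] ℝ) (A : Set X) : Prop :=
  ∀ ε > (0 : ℝ), ∃ N : ℕ, ∀ n ≥ N, ∀ a ∈ A, |f n a| ≤ ε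

/-- A norm bounded set `A` is a Dunford–Pettis set: every weakly null sequence in the dual
converges to zero uniformly on `A`. -/
def IsDPSet {X : Type*} [NormedAddCommGroup X] [NormedSpace ℝ X] (A : Set X) : Prop :=
  Bornology.IsBounded A ∧
    ∀ f : ℕ → X →L[ℝ] ℝ,
      (∀ g : (X →L[ℝ] ℝ) →L[ℝ] ℝ, Tendsto (fun n => g (f n)) atTop (𝓝 0)) →
        UnifNullOn f A

/-- The solid hull of a set in a Banach lattice. -/
def solHull {F : Type*} [NormedAddCommGroup F] [Lattice F] [HasSolidNorm F] [IsOrderedAddMonoid F] (A : Set F) : Set F :=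
  {x | ∃ a ∈ A, |x| ≤ |a|}

/-- A subset of a Banach lattice is L-weakly compact (Lwc) if it is norm bounded and every
disjoint sequence in its solid hull is norm null. -/
def IsLwcSet {F : Type*} [NormedAddCommGroup F] [Lattice F] [HasSolidNorm F] [IsOrderedAddMonoid F] (A : Set F) : Prop :=
  Bornology.IsBounded A ∧
    ∀ x : ℕ → F, (∀ n, x n ∈ solHull A) →
      (∀ n m, n ≠ m → |x n| ⊓ |x m| = 0) →
        Tendsto (fun n => ‖x n‖) atTop (𝓝 0)

/-- An operator is Dunford–Pettis L-weakly compact if it carries DP sets onto Lwc sets. -/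
def IsDPLwcOp {X : Type*} [NormedAddCommGroup X] [NormedSpace ℝ X]
    {F : Type*} [NormedAddCommGroup F] [Lattice F] [HasSolidNorm F] [IsOrderedAddMonoid F] [NormedSpace ℝ F] (T : X →L[ℝ] F) : Prop :=
  ∀ A : Set X, IsDPSet A → IsLwcSet (T '' A)

/-- The operator norm limit of a sequence of Dunford–Pettis L-weakly compact operators is
Dunford–Pettis L-weakly compact. -/
theorem dpLwc_closed
    {X : Type*} [NormedAddCommGroup X] [NormedSpace ℝ X] [CompleteSpace X]
    {F : Type*} [NormedAddCommGroup F] [Lattice F] [HasSolidNorm F] [IsOrderedAddMonoid F] [NormedSpace ℝ F] [CompleteSpace F]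
    (Tn : ℕ → X →L[ℝ] F) (T : X →L[ℝ] F)
    (hTn : ∀ n, IsDPLwcOp (Tn n))
    (hlim : Tendsto (fun n => ‖Tn n - T‖) atTop (𝓝 0)) :
    IsDPLwcOp T := by
  intro A hA
  obtain ⟨M, hM⟩ := (isBounded_iff_forall_norm_le).mp hA.1
  have hM0 : ∀ a ∈ A, ‖a‖ ≤ max M 0 := fun a ha => le_trans (hM a ha) (le_max_left _ _)
  constructor
  · -- boundedness of T '' A
    refine (isBounded_iff_forall_norm_le).mpr ⟨‖T‖ * max M 0, ?_⟩
    rintro _ ⟨a, ha, rfl⟩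
    calc ‖T a‖ ≤ ‖T‖ * ‖a‖ := T.le_opNorm a
    _ ≤ ‖T‖ * max M 0 := by
        exact mul_le_mul_of_nonneg_left (hM0 a ha) (norm_nonneg _)
  · intro x hx hdisj
    -- choose witnesses a n
    choose b hb hxb using hx
    choose a ha hab using hb
    rw [Metric.tendsto_atTop]
    intro ε hε
    -- choose k with ‖Tn k - T‖ * (max M 0) < ε/4
    have hε4 : (0:ℝ) < ε/4 := by positivity
    have hsmall : ∀ᶠ k in atTop, ‖Tn k - T‖ * (max M 0 + 1) < ε/4 := by
      have := hlim.eventually (eventually_lt_nhds (show (0:ℝ) < ε/4/(max M 0 + 1) by positivity))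
      filter_upwards [this] with k hk
      rw [mul_comm] at *
      calc (max M 0 + 1) * ‖Tn k - T‖ < (max M 0 + 1) * (ε/4/(max M 0 + 1)) := by
            exact mul_lt_mul_of_pos_left hk (by positivity)
      _ = ε/4 := by field_simp
    obtain ⟨k, hk⟩ := hsmall.exists
    -- bound on the perturbation
    set c : ℕ → F := fun n => |(T - Tn k) (a n)| with hc
    have hcnorm : ∀ n, ‖c n‖ < ε/4 := by
      intro n
      calc ‖c n‖ = ‖(T - Tn k) (a n)‖ := norm_abs_eq_norm _
      _ ≤ ‖T - Tn k‖ * ‖a n‖ := (T - Tn k).le_opNorm _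
      _ ≤ ‖Tn k - T‖ * (max M 0 + 1) := by
          rw [norm_sub_rev]
          exact mul_le_mul_of_nonneg_left (le_trans (hM0 _ (ha n)) (by linarith)) (norm_nonneg _)
      _ < ε/4 := hk
    have hc0 : ∀ n, (0:F) ≤ c n := fun n => abs_nonneg _
    -- the corrected sequence
    set y : ℕ → F := fun n => (|x n| - c n) ⊔ 0 with hy
    have hy0 : ∀ n, (0:F) ≤ y n := fun n => le_sup_right
    have hyabs : ∀ n, |y n| = y n := fun n => abs_of_nonneg (hy0 n)
    have hyx : ∀ n, y n ≤ |x n| := by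
      intro n
      refine sup_le ?_ (abs_nonneg _)
      calc |x n| - c n ≤ |x n| - 0 := by
            exact sub_le_sub_left (hc0 n) _
      _ = |x n| := sub_zero _
    have hysol : ∀ n, y n ∈ solHull ((Tn k) '' A) := by
      intro n
      refine ⟨(Tn k) (a n), ⟨a n, ha n, rfl⟩, ?_⟩
      rw [hyabs]
      refine sup_le ?_ (abs_nonneg _)
      rw [sub_le_iff_le_add]
      have hx1 : |x n| ≤ |T (a n)| := by
        have h := hxb n
        rwa [← hab n] at h
      have hsplit : T (a n) = Tn k (a n) + (T - Tn k) (a n) := by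
        rw [ContinuousLinearMap.sub_apply]; abel
      calc |x n| ≤ |T (a n)| := hx1
      _ = |Tn k (a n) + (T - Tn k) (a n)| := by rw [← hsplit]
      _ ≤ |Tn k (a n)| + |(T - Tn k) (a n)| := abs_add_le _ _
    have hydisj : ∀ n m, n ≠ m → |y n| ⊓ |y m| = 0 := by
      intro n m hnm
      have h1 : |y n| ⊓ |y m| ≤ |x n| ⊓ |x m| := by
        rw [hyabs, hyabs]
        exact inf_le_inf (hyx n) (hyx m)
      have h2 : (0:F) ≤ |y n| ⊓ |y m| := le_inf (abs_nonneg _) (abs_nonneg _)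
      exact le_antisymm (hdisj n m hnm ▸ h1) h2
    have hylwc := (hTn k A hA).2 y hysol hydisj
    rw [Metric.tendsto_atTop] at hylwc
    obtain ⟨N, hN⟩ := hylwc (ε/4) hε4
    refine ⟨N, fun n hn => ?_⟩
    have hyN : ‖y n‖ < ε/4 := by
      have := hN n hn
      rwa [Real.dist_eq, sub_zero, abs_of_nonneg (norm_nonneg _)] at this
    -- |x n| ≤ y n + c n
    have hxyc : |x n| ≤ y n + c n := by
      rw [← sub_le_iff_le_add]
      exact le_sup_left
    have hnx : ‖x n‖ ≤ ‖y n + c n‖ := by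
      rw [← norm_abs_eq_norm (x n)]
      apply norm_le_norm_of_abs_le_abs
      rw [abs_of_nonneg (abs_nonneg _), abs_of_nonneg (le_trans (hy0 n) (le_add_of_nonneg_right (hc0 n)))]
      exact hxyc
    rw [Real.dist_eq, sub_zero, abs_of_nonneg (norm_nonneg _)]
    calc ‖x n‖ ≤ ‖y n + c n‖ := hnx
    _ ≤ ‖y n‖ + ‖c n‖ := norm_add_le _ _
    _ < ε/4 + ε/4 := add_lt_add hyN (hcnorm n)
    _ < ε := by linarith
end

section
/- Let X be a Banach space, F a Banach lattice, and let (T_n) be a sequence of limitedly L-weakly compact operators from X to F converging in operator norm to a bounded operator T : X → F. Then T is limitedly L-weakly compact. -/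
open Filter Topology

/-- A norm bounded set `A` is limited: every weak*-null sequence in the dual converges
to zero uniformly on `A`. -/
def IsLimitedSet {X : Type*} [NormedAddCommGroup X] [NormedSpace ℝ X] (A : Set X) : Prop :=
  Bornology.IsBounded A ∧
    ∀ f : ℕ → X →L[ℝ] ℝ,
      (∀ x : X, Tendsto (fun n => f n x) atTop (𝓝 0)) →
        UnifNullOn f A

/-- An operator is limitedly L-weakly compact if it carries limited sets onto Lwc sets. -/
def IsLLwcOp {X : Type*} [NormedAddCommGroup X] [NormedSpace ℝ X]
    {F : Type*} [NormedAddCommGroup F] [Lattice F] [HasSolidNorm F] [IsOrderedAddMonoid F] [NormedSpace ℝ F] (T : X →L[ℝ] F) : Prop :=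
  ∀ A : Set X, IsLimitedSet A → IsLwcSet (T '' A)

/-- The operator norm limit of a sequence of limitedly L-weakly compact operators is
limitedly L-weakly compact. -/
theorem lLwc_closed
    {X : Type*} [NormedAddCommGroup X] [NormedSpace ℝ X] [CompleteSpace X]
    {F : Type*} [NormedAddCommGroup F] [Lattice F] [HasSolidNorm F] [IsOrderedAddMonoid F] [NormedSpace ℝ F] [CompleteSpace F]
    (Tn : ℕ → X →L[ℝ] F) (T : X →L[ℝ] F)
    (hTn : ∀ n, IsLLwcOp (Tn n))
    (hlim : Tendsto (fun n => ‖Tn n - T‖) atTop (𝓝 0)) :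
    IsLLwcOp T := by
  intro A hA
  obtain ⟨hAbd, hAlim⟩ := hA
  obtain ⟨M, hM⟩ := hAbd.exists_norm_le
  refine ⟨T.lipschitz.isBounded_image hAbd, ?_⟩
  intro x hx hdisj
  -- choose witnesses
  choose b hb hxb using hx
  choose a ha hTa using hb
  rw [Metric.tendsto_atTop]
  intro ε hε
  set M' : ℝ := |M| + 1 with hM'
  have hM'pos : (0 : ℝ) < M' := by positivity
  have haM : ∀ n, ‖a n‖ ≤ M' := fun n =>
    (hM (a n) (ha n)).trans ((le_abs_self M).trans (by simp [hM']))
  -- choose k with ‖Tn k - T‖ small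
  obtain ⟨k, hk⟩ : ∃ k, ‖Tn k - T‖ < ε / (2 * M') := by
    have := (Metric.tendsto_atTop.mp hlim) (ε / (2 * M')) (by positivity)
    obtain ⟨N, hN⟩ := this
    refine ⟨N, ?_⟩
    have := hN N le_rfl
    rwa [Real.dist_eq, sub_zero, abs_of_nonneg (norm_nonneg _)] at this
  -- the auxiliary sequence
  set c : ℕ → F := fun n => |(Tn k - T) (a n)| with hc
  set z : ℕ → F := fun n => |x n| - (|x n| ⊓ c n) with hz
  have hznonneg : ∀ n, 0 ≤ z n := fun n => sub_nonneg.2 inf_le_left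
  have hzabs : ∀ n, |z n| = z n := fun n => abs_of_nonneg (hznonneg n)
  have hzlex : ∀ n, z n ≤ |x n| := fun n =>
    sub_le_self _ (le_inf (abs_nonneg _) (abs_nonneg _))
  -- z n ≤ |Tn k (a n)|
  have hkey : ∀ n, z n ≤ |Tn k (a n)| := by
    intro n
    have hTeq : Tn k (a n) - (Tn k - T) (a n) = T (a n) := by
      simp [ContinuousLinearMap.sub_apply]
    have h1 : |x n| ≤ |Tn k (a n)| + c n := by
      have hx1 : |x n| ≤ |T (a n)| := by rw [hTa n]; exact hxb n
      refine hx1.trans ?_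
      calc |T (a n)| = |Tn k (a n) + -((Tn k - T) (a n))| := by
            rw [← sub_eq_add_neg, hTeq]
        _ ≤ |Tn k (a n)| + |-((Tn k - T) (a n))| := abs_add_le _ _
        _ = |Tn k (a n)| + c n := by rw [abs_neg]
    have h2 : z n = 0 ⊔ (|x n| - c n) := by
      show |x n| - (|x n| ⊓ c n) = 0 ⊔ (|x n| - c n)
      rw [sub_inf, sub_self]
    rw [h2]
    exact sup_le (abs_nonneg _) (by rwa [sub_le_iff_le_add])
  -- z is a disjoint sequence in solHull of (Tn k) '' A
  have hzmem : ∀ n, z n ∈ solHull (Tn k '' A) := fun n =>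
    ⟨Tn k (a n), ⟨a n, ha n, rfl⟩, by rw [hzabs n]; exact hkey n⟩
  have hzdisj : ∀ n m, n ≠ m → |z n| ⊓ |z m| = 0 := by
    intro n m hnm
    refine le_antisymm ?_ (le_inf (abs_nonneg _) (abs_nonneg _))
    calc |z n| ⊓ |z m| ≤ |x n| ⊓ |x m| := by
          rw [hzabs, hzabs]; exact inf_le_inf (hzlex n) (hzlex m)
      _ = 0 := hdisj n m hnm
  have hztend := (hTn k A ⟨hAbd, hAlim⟩).2 z hzmem hzdisj
  obtain ⟨N, hN⟩ := (Metric.tendsto_atTop.mp hztend) (ε / 2) (by positivity)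
  refine ⟨N, fun n hn => ?_⟩
  have hzn : ‖z n‖ < ε / 2 := by
    have := hN n hn
    rwa [Real.dist_eq, sub_zero, abs_of_nonneg (norm_nonneg _)] at this
  -- bound the inf part
  have hinf : ‖|x n| ⊓ c n‖ ≤ ε / 2 := by
    have h1 : |(|x n| ⊓ c n)| ≤ |(Tn k - T) (a n)| := by
      rw [abs_of_nonneg (le_inf (abs_nonneg _) (abs_nonneg _))]
      calc |x n| ⊓ c n ≤ c n := inf_le_right
        _ = |(Tn k - T) (a n)| := rfl
        _ ≤ |(|(Tn k - T) (a n)|)| := le_abs_self _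
        _ = |(Tn k - T) (a n)| := abs_abs _
    have h2 : ‖|x n| ⊓ c n‖ ≤ ‖(Tn k - T) (a n)‖ := norm_le_norm_of_abs_le_abs h1
    have h3 : ‖(Tn k - T) (a n)‖ ≤ ‖Tn k - T‖ * M' :=
      ((Tn k - T).le_opNorm (a n)).trans
        (mul_le_mul_of_nonneg_left (haM n) (norm_nonneg _))
    have h4 : ‖Tn k - T‖ * M' ≤ (ε / (2 * M')) * M' :=
      mul_le_mul_of_nonneg_right hk.le hM'pos.le
    have h5 : (ε / (2 * M')) * M' = ε / 2 := by field_simp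
    rw [h5] at h4
    exact h2.trans (h3.trans h4)
  rw [Real.dist_eq, sub_zero, abs_of_nonneg (norm_nonneg _)]
  calc ‖x n‖ = ‖|x n|‖ := (norm_abs_eq_norm _).symm
    _ = ‖z n + (|x n| ⊓ c n)‖ := by rw [hz]; simp
    _ ≤ ‖z n‖ + ‖|x n| ⊓ c n‖ := norm_add_le _ _
    _ < ε / 2 + ε / 2 := by linarith
    _ = ε := by ring
end

section
/- Let E be a Banach lattice, Y a Banach space, and let (T_n) be a sequence of limitedly M-weakly compact operators from E to Y converging in operator norm to a bounded operator T : E → Y. Then T is limitedly M-weakly compact. -/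
open Filter Topology

/-- An operator `T` from a Banach lattice `E` to a Banach space `Y` is limitedly M-weakly
compact if `(T xₙ)` is weakly null for every disjoint norm bounded sequence `(xₙ)` in `E`. -/
def IsLMwcOp {E : Type*} [NormedAddCommGroup E] [Lattice E] [HasSolidNorm E] [IsOrderedAddMonoid E] [NormedSpace ℝ E]
    {Y : Type*} [NormedAddCommGroup Y] [NormedSpace ℝ Y] (T : E →L[ℝ] Y) : Prop :=
  ∀ x : ℕ → E, Bornology.IsBounded (Set.range x) →
    (∀ n m, n ≠ m → |x n| ⊓ |x m| = 0) →
      ∀ g : Y →L[ℝ] ℝ, Tendsto (fun n => g (T (x n))) atTop (𝓝 0)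

/-- The operator norm limit of a sequence of limitedly M-weakly compact operators is
limitedly M-weakly compact. -/
theorem lMwc_closed
    {E : Type*} [NormedAddCommGroup E] [Lattice E] [HasSolidNorm E] [IsOrderedAddMonoid E] [NormedSpace ℝ E] [CompleteSpace E]
    {Y : Type*} [NormedAddCommGroup Y] [NormedSpace ℝ Y] [CompleteSpace Y]
    (Tn : ℕ → E →L[ℝ] Y) (T : E →L[ℝ] Y)
    (hTn : ∀ n, IsLMwcOp (Tn n))
    (hlim : Tendsto (fun n => ‖Tn n - T‖) atTop (𝓝 0)) :
    IsLMwcOp T := by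
  intro x hx hdisj g
  obtain ⟨M, hM⟩ := isBounded_iff_forall_norm_le.mp hx
  have hM' : ∀ n, ‖x n‖ ≤ M := fun n => hM _ (Set.mem_range_self n)
  have hM0 : 0 ≤ M := le_trans (norm_nonneg _) (hM' 0)
  rw [Metric.tendsto_atTop]
  intro ε hε
  set δ := ε / (2 * (‖g‖ * M + 1)) with hδdef
  have hδ : 0 < δ := by positivity
  obtain ⟨k, hk⟩ := Metric.tendsto_atTop.mp hlim δ hδ
  have hk' : ‖Tn k - T‖ < δ := by
    have := hk k le_rfl
    rwa [Real.dist_eq, sub_zero, abs_of_nonneg (norm_nonneg _)] at this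
  obtain ⟨N, hN⟩ := Metric.tendsto_atTop.mp (hTn k x hx hdisj g) (ε / 2) (by positivity)
  refine ⟨N, fun n hn => ?_⟩
  have h2 : |g (Tn k (x n))| < ε / 2 := by
    have := hN n hn
    rwa [Real.dist_eq, sub_zero] at this
  have key : g (T (x n)) = g (Tn k (x n)) - g ((Tn k - T) (x n)) := by
    simp [map_sub]
  rw [Real.dist_eq, sub_zero, key]
  have h1 : |g ((Tn k - T) (x n))| ≤ ‖g‖ * (‖Tn k - T‖ * ‖x n‖) := by
    calc |g ((Tn k - T) (x n))| ≤ ‖g‖ * ‖(Tn k - T) (x n)‖ := g.le_opNorm _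
    _ ≤ ‖g‖ * (‖Tn k - T‖ * ‖x n‖) := by
        gcongr
        exact (Tn k - T).le_opNorm _
  have h1' : ‖g‖ * (‖Tn k - T‖ * ‖x n‖) < ε / 2 := by
    have hb : ‖g‖ * (‖Tn k - T‖ * ‖x n‖) ≤ ‖g‖ * (δ * M) := by
      gcongr
      · exact hM' n
    have heq : δ * (‖g‖ * M + 1) = ε / 2 := by
      rw [hδdef]; field_simp
    nlinarith [hδ]
  calc |g (Tn k (x n)) - g ((Tn k - T) (x n))|
      ≤ |g (Tn k (x n))| + |g ((Tn k - T) (x n))| := abs_sub _ _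
    _ < ε / 2 + ε / 2 := add_lt_add_of_lt_of_le h2 (h1.trans h1'.le)
    _ = ε := by ring
end

section
/- Let E and F be Banach lattices and let P be a nonempty set of bounded linear operators from E to F such that S + T ∈ P and S − T ∈ P whenever S, T ∈ P, and such that P has the domination property (if 0 ≤ S ≤ T and T ∈ P then S ∈ P). Let T : E → F be a bounded operator whose modulus |T| exists in the ordered space of bounded operators (i.e. |T| is the least upper bound of T and −T with respect to the operator order). Then T is an r-P-operator if and only if |T| ∈ P. -/
/-- A bounded operator between Banach lattices is positive if it maps positive elements to
positive elements. -/
def IsPosOp {E F : Type*} [NormedAddCommGroup E] [Lattice E] [HasSolidNorm E] [IsOrderedAddMonoid E] [NormedSpace ℝ E]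
    [NormedAddCommGroup F] [Lattice F] [HasSolidNorm F] [IsOrderedAddMonoid F] [NormedSpace ℝ F] (T : E →L[ℝ] F) : Prop :=
  ∀ x : E, 0 ≤ x → 0 ≤ T x

/-- The operator order: `S ≤ T` iff `T - S` is a positive operator. -/
def OpLE {E F : Type*} [NormedAddCommGroup E] [Lattice E] [HasSolidNorm E] [IsOrderedAddMonoid E] [NormedSpace ℝ E]
    [NormedAddCommGroup F] [Lattice F] [HasSolidNorm F] [IsOrderedAddMonoid F] [NormedSpace ℝ F] (S T : E →L[ℝ] F) : Prop :=
  IsPosOp (T - S)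

/-- `M` is the modulus of `T`: the least operator `U` satisfying `±T ≤ U`. -/
def IsModulusOf {E F : Type*} [NormedAddCommGroup E] [Lattice E] [HasSolidNorm E] [IsOrderedAddMonoid E] [NormedSpace ℝ E]
    [NormedAddCommGroup F] [Lattice F] [HasSolidNorm F] [IsOrderedAddMonoid F] [NormedSpace ℝ F] (M T : E →L[ℝ] F) : Prop :=
  OpLE T M ∧ OpLE (-T) M ∧ ∀ V : E →L[ℝ] F, OpLE T V → OpLE (-T) V → OpLE M V

/-- `T` is an r-`P`-operator if `T = T₁ - T₂` with `T₁, T₂` positive operators in `P`. -/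
def IsRPOp {E F : Type*} [NormedAddCommGroup E] [Lattice E] [HasSolidNorm E] [IsOrderedAddMonoid E] [NormedSpace ℝ E]
    [NormedAddCommGroup F] [Lattice F] [HasSolidNorm F] [IsOrderedAddMonoid F] [NormedSpace ℝ F]
    (P : Set (E →L[ℝ] F)) (T : E →L[ℝ] F) : Prop :=
  ∃ T₁ T₂ : E →L[ℝ] F, T₁ ∈ P ∧ T₂ ∈ P ∧ IsPosOp T₁ ∧ IsPosOp T₂ ∧ T = T₁ - T₂

/-- If a nonempty set `P` of operators is closed under sums and differences and has the
domination property, and `T` has a modulus `|T|`, then `T` is an r-`P`-operator iff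
`|T| ∈ P`. -/
theorem rP_iff_modulus_mem
    {E F : Type*} [NormedAddCommGroup E] [Lattice E] [HasSolidNorm E] [IsOrderedAddMonoid E] [NormedSpace ℝ E] [CompleteSpace E]
    [NormedAddCommGroup F] [Lattice F] [HasSolidNorm F] [IsOrderedAddMonoid F] [NormedSpace ℝ F] [CompleteSpace F]
    (P : Set (E →L[ℝ] F)) (hne : P.Nonempty)
    (hadd : ∀ S ∈ P, ∀ T ∈ P, S + T ∈ P)
    (hsub : ∀ S ∈ P, ∀ T ∈ P, S - T ∈ P)
    (hdom : ∀ S T : E →L[ℝ] F, IsPosOp S → OpLE S T → T ∈ P → S ∈ P)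
    (T M : E →L[ℝ] F) (hM : IsModulusOf M T) :
    IsRPOp P T ↔ M ∈ P := by

  obtain ⟨hMT, hMnT, hleast⟩ := hM
  -- M is a positive operator
  have hMpos : IsPosOp M := by
    intro x hx
    have h1 : T x ≤ M x := by
      have := hMT x hx
      simpa [sub_nonneg] using this
    have h2 : -T x ≤ M x := by
      have h := hMnT x hx
      have h' : (0 : F) ≤ M x + T x := by simpa [sub_neg_eq_add] using h
      exact neg_le_iff_add_nonneg.mpr h'
    have habs : |T x| ≤ M x := by rw [abs]; exact sup_le h1 h2
    exact le_trans (abs_nonneg _) habs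
  constructor
  · rintro ⟨T₁, T₂, hT₁P, hT₂P, hT₁pos, hT₂pos, rfl⟩
    have hUP : T₁ + T₂ ∈ P := hadd _ hT₁P _ hT₂P
    have h1 : OpLE (T₁ - T₂) (T₁ + T₂) := by
      intro x hx
      have := hT₂pos x hx
      have e : (T₁ + T₂ - (T₁ - T₂)) x = T₂ x + T₂ x := by
        simp [two_nsmul]
      rw [e]
      exact add_nonneg this this
    have h2 : OpLE (-(T₁ - T₂)) (T₁ + T₂) := by
      intro x hx
      have := hT₁pos x hx
      have e : (T₁ + T₂ - -(T₁ - T₂)) x = T₁ x + T₁ x := by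
        simp only [ContinuousLinearMap.sub_apply, ContinuousLinearMap.add_apply,
          ContinuousLinearMap.neg_apply]
        abel
      rw [e]
      exact add_nonneg this this
    exact hdom M (T₁ + T₂) hMpos (hleast _ h1 h2) hUP
  · intro hMP
    refine ⟨M + T, M, ?_, hMP, ?_, hMpos, by abel⟩
    · refine hdom (M + T) (M + M) ?_ ?_ (hadd _ hMP _ hMP)
      · intro x hx
        have := hMnT x hx
        simpa [sub_neg_eq_add] using this
      · intro x hx
        have := hMT x hx
        have e : (M + M - (M + T)) x = (M - T) x := by simp
        rw [e]; exact this
    · intro x hx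
      have := hMnT x hx
      simpa [sub_neg_eq_add] using this
end

section
/- Let E and F be Banach lattices and let S, T : E → F be bounded linear operators with ±S ≤ T (i.e. S ≤ T and −S ≤ T in the operator order). If T is limitedly L-weakly compact, then S is limitedly L-weakly compact. -/
open Filter Topology

/-! ### Auxiliary lattice lemmas -/

section AuxLattice
variable {G : Type*} [NormedAddCommGroup G] [Lattice G] [HasSolidNorm G] [IsOrderedAddMonoid G]

lemma aux_abs_sub_le (x y : G) : |x - y| ≤ |x| + |y| := by
  calc |x - y| = |x + -y| := by rw [sub_eq_add_neg]
  _ ≤ |x| + |-y| := abs_add_le x (-y)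
  _ = |x| + |y| := by rw [abs_neg]

lemma aux_neg_abs_le (x : G) : -|x| ≤ x := by
  have h := neg_le_neg (neg_le_abs x); rwa [neg_neg] at h

lemma aux_inf_add_le {a c d : G} (ha : 0 ≤ a) (hc : 0 ≤ c) (hd : 0 ≤ d) :
    a ⊓ (c + d) ≤ a ⊓ c + a ⊓ d := by
  have key : a ⊓ c + a ⊓ d = (a + a) ⊓ (a + d) ⊓ ((c + a) ⊓ (c + d)) := by
    rw [inf_add, add_inf, add_inf, inf_inf_inf_comm]
  rw [key]
  refine le_inf (le_inf ?_ ?_) (le_inf ?_ ?_)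
  · exact inf_le_left.trans (le_add_of_nonneg_right ha)
  · exact inf_le_left.trans (le_add_of_nonneg_right hd)
  · exact inf_le_left.trans (le_add_of_nonneg_left hc)
  · exact inf_le_right

lemma aux_half_nonneg {z : G} (h : 0 ≤ z + z) : 0 ≤ z := by
  have h1 : -z ≤ z := sub_nonneg.mp (by rwa [sub_neg_eq_add])
  have h2 : z⁻ ≤ z⁺ := sup_le_sup_right h1 0
  have h3 : z⁻ ≤ 0 := by
    calc z⁻ ≤ z⁺ ⊓ z⁻ := le_inf h2 le_rfl
    _ = 0 := posPart_inf_negPart_eq_zero z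
  exact negPart_eq_zero.mp (le_antisymm h3 (negPart_nonneg z))

lemma aux_disj_nsmul {a c : G} (ha : 0 ≤ a) (hc : 0 ≤ c) (h : a ⊓ c = 0) (k : ℕ) :
    a ⊓ (k • c) = 0 := by
  induction k with
  | zero => simpa using inf_eq_right.mpr ha
  | succ k ih =>
      refine le_antisymm ?_ (le_inf ha (nsmul_nonneg hc _))
      calc a ⊓ ((k + 1) • c) = a ⊓ (k • c + c) := by rw [succ_nsmul]
      _ ≤ a ⊓ (k • c) + a ⊓ c := aux_inf_add_le ha (nsmul_nonneg hc k) hc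
      _ = 0 := by rw [ih, h, add_zero]

lemma aux_disj_nsmul_nsmul {a c : G} (ha : 0 ≤ a) (hc : 0 ≤ c) (h : a ⊓ c = 0) (j k : ℕ) :
    (j • a) ⊓ (k • c) = 0 := by
  have h1 : (k • c) ⊓ a = 0 := by rw [inf_comm]; exact aux_disj_nsmul ha hc h k
  have h2 : (k • c) ⊓ (j • a) = 0 := aux_disj_nsmul (nsmul_nonneg hc k) ha h1 j
  rw [inf_comm]; exact h2

lemma aux_posPart_le_abs (x : G) : x⁺ ≤ |x| := by
  rw [posPart_def]
  exact sup_le (le_abs_self x) (abs_nonneg x)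

lemma aux_negPart_le_abs (x : G) : x⁻ ≤ |x| := by
  rw [negPart_def]
  exact sup_le (neg_le_abs x) (abs_nonneg x)

/-- Riesz-type decomposition with domination. -/
lemma aux_riesz {x w₁ w₂ : G} (hw₁ : 0 ≤ w₁) (hw₂ : 0 ≤ w₂) (h : |x| ≤ w₁ + w₂) :
    ∃ p : G, |p| ≤ w₁ ∧ |p| ≤ |x| ∧ |x - p| ≤ w₂ ∧ |x - p| ≤ |x| + |x| := by
  have habs_p : |(x ⊔ -w₁) ⊓ w₁| ≤ |x| := by
    refine abs_le'.mpr ⟨?_, ?_⟩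
    · exact inf_le_left.trans (sup_le (le_abs_self x)
        ((neg_nonpos.mpr hw₁).trans (abs_nonneg x)))
    · rw [neg_le]
      exact le_inf ((aux_neg_abs_le x).trans le_sup_left)
        ((neg_nonpos.mpr (abs_nonneg x)).trans hw₁)
  refine ⟨(x ⊔ -w₁) ⊓ w₁, ?_, habs_p, ?_, ?_⟩
  · refine abs_le'.mpr ⟨inf_le_right, ?_⟩
    rw [neg_le]
    exact le_inf le_sup_right (neg_le_self hw₁)
  · have key : x - (x ⊔ -w₁) ⊓ w₁ = (x - (x ⊔ -w₁)) ⊔ (x - w₁) := by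
      rw [sub_inf]
    rw [key]
    refine abs_le'.mpr ⟨?_, ?_⟩
    · refine sup_le ?_ ?_
      · have h1 : x - (x ⊔ -w₁) ≤ x - x := sub_le_sub_left le_sup_left x
        simpa using h1.trans (by simp [hw₂])
      · have h2 : x ≤ w₁ + w₂ := (le_abs_self x).trans h
        exact sub_le_iff_le_add'.mpr h2
    · rw [neg_le]
      have h1 : x - (x ⊔ -w₁) = (x - x) ⊓ (x - -w₁) := by rw [sub_sup]
      have h2 : -w₂ ≤ (x - x) ⊓ (x - -w₁) := by
        refine le_inf ?_ ?_
        · simpa using neg_nonpos.mpr hw₂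
        · rw [sub_neg_eq_add]
          have hx : -(w₁ + w₂) ≤ x := (neg_le_neg h).trans (aux_neg_abs_le x)
          have h3 := add_le_add_left hx w₁
          calc -w₂ = -(w₁ + w₂) + w₁ := by abel
          _ ≤ x + w₁ := h3
      exact h2.trans (h1 ▸ le_sup_left)
  · calc |x - (x ⊔ -w₁) ⊓ w₁| ≤ |x| + |(x ⊔ -w₁) ⊓ w₁| := aux_abs_sub_le _ _
    _ ≤ |x| + |x| := by gcongr

end AuxLattice

/-! ### The sup-formula functional -/

section HFun
variable {G : Type*} [NormedAddCommGroup G] [Lattice G] [HasSolidNorm G] [IsOrderedAddMonoid G] [NormedSpace ℝ G]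

/-- Values of `g` on vectors dominated by `w` lying in the ideal generated by `b` and `c`. -/
def Hs (g : G →L[ℝ] ℝ) (b c : G) (w : G) : Set ℝ :=
  {r | ∃ v : G, |v| ≤ w ∧ (∃ k : ℕ, |v| ≤ k • b ∧ |v| ≤ k • c) ∧ r = g v}

lemma Hs_zero_mem (g : G →L[ℝ] ℝ) (b c : G) {w : G} (hw : 0 ≤ w) : (0 : ℝ) ∈ Hs g b c w :=
  ⟨0, by simpa using hw, ⟨0, by simp⟩, by simp⟩

lemma Hs_nonempty (g : G →L[ℝ] ℝ) (b c : G) {w : G} (hw : 0 ≤ w) : (Hs g b c w).Nonempty :=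
  ⟨0, Hs_zero_mem g b c hw⟩

lemma Hs_le (g : G →L[ℝ] ℝ) (b c : G) {w : G} (hw : 0 ≤ w) {r : ℝ}
    (hr : r ∈ Hs g b c w) : r ≤ ‖g‖ * ‖w‖ := by
  obtain ⟨v, hv, -, rfl⟩ := hr
  have h1 : ‖v‖ ≤ ‖w‖ := norm_le_norm_of_abs_le_abs (hv.trans_eq (abs_of_nonneg hw).symm)
  calc g v ≤ |g v| := le_abs_self _
  _ = ‖g v‖ := (Real.norm_eq_abs _).symm
  _ ≤ ‖g‖ * ‖v‖ := g.le_opNorm v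
  _ ≤ ‖g‖ * ‖w‖ := mul_le_mul_of_nonneg_left h1 (norm_nonneg g)

lemma Hs_bddAbove (g : G →L[ℝ] ℝ) (b c : G) {w : G} (hw : 0 ≤ w) :
    BddAbove (Hs g b c w) := ⟨‖g‖ * ‖w‖, fun _ hr => Hs_le g b c hw hr⟩

/-- Sup of `Hs`. -/
noncomputable def hF (g : G →L[ℝ] ℝ) (b c : G) (w : G) : ℝ := sSup (Hs g b c w)

lemma hF_nonneg (g : G →L[ℝ] ℝ) (b c : G) {w : G} (hw : 0 ≤ w) : 0 ≤ hF g b c w :=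
  le_csSup (Hs_bddAbove g b c hw) (Hs_zero_mem g b c hw)

lemma hF_le (g : G →L[ℝ] ℝ) (b c : G) {w : G} (hw : 0 ≤ w) : hF g b c w ≤ ‖g‖ * ‖w‖ :=
  csSup_le (Hs_nonempty g b c hw) (fun _ hr => Hs_le g b c hw hr)

lemma le_hF (g : G →L[ℝ] ℝ) (b c : G) {w : G} (hw : 0 ≤ w) {r : ℝ}
    (hr : r ∈ Hs g b c w) : r ≤ hF g b c w :=
  le_csSup (Hs_bddAbove g b c hw) hr

lemma hF_add (g : G →L[ℝ] ℝ) (b c : G) {w₁ w₂ : G} (hw₁ : 0 ≤ w₁) (hw₂ : 0 ≤ w₂) :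
    hF g b c (w₁ + w₂) = hF g b c w₁ + hF g b c w₂ := by
  have hw12 : 0 ≤ w₁ + w₂ := add_nonneg hw₁ hw₂
  refine le_antisymm ?_ ?_
  · refine csSup_le (Hs_nonempty g b c hw12) ?_
    rintro r ⟨v, hv, ⟨k, hkb, hkc⟩, rfl⟩
    obtain ⟨p, hp1, hp2, hq1, hq2⟩ := aux_riesz hw₁ hw₂ hv
    have hgp : g p ≤ hF g b c w₁ :=
      le_hF g b c hw₁ ⟨p, hp1, ⟨k, hp2.trans hkb, hp2.trans hkc⟩, rfl⟩
    have hgq : g (v - p) ≤ hF g b c w₂ := by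
      refine le_hF g b c hw₂ ⟨v - p, hq1, ⟨k + k, ?_, ?_⟩, rfl⟩
      · calc |v - p| ≤ |v| + |v| := hq2
        _ ≤ k • b + k • b := add_le_add hkb hkb
        _ = (k + k) • b := by rw [add_nsmul]
      · calc |v - p| ≤ |v| + |v| := hq2
        _ ≤ k • c + k • c := add_le_add hkc hkc
        _ = (k + k) • c := by rw [add_nsmul]
    have hsplit : g v = g p + g (v - p) := by rw [← map_add]; congr 1; abel
    rw [hsplit]; exact add_le_add hgp hgq
  · have key : ∀ r₁ ∈ Hs g b c w₁, ∀ r₂ ∈ Hs g b c w₂, r₁ + r₂ ≤ hF g b c (w₁ + w₂) := by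
      rintro r₁ ⟨v₁, hv₁, ⟨k₁, hb₁, hc₁⟩, rfl⟩ r₂ ⟨v₂, hv₂, ⟨k₂, hb₂, hc₂⟩, rfl⟩
      refine le_hF g b c hw12 ⟨v₁ + v₂, (abs_add_le _ _).trans (add_le_add hv₁ hv₂),
        ⟨k₁ + k₂, ?_, ?_⟩, (map_add g v₁ v₂).symm⟩
      · calc |v₁ + v₂| ≤ |v₁| + |v₂| := abs_add_le _ _
        _ ≤ k₁ • b + k₂ • b := add_le_add hb₁ hb₂
        _ = (k₁ + k₂) • b := by rw [add_nsmul]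
      · calc |v₁ + v₂| ≤ |v₁| + |v₂| := abs_add_le _ _
        _ ≤ k₁ • c + k₂ • c := add_le_add hc₁ hc₂
        _ = (k₁ + k₂) • c := by rw [add_nsmul]
    refine le_of_forall_pos_le_add fun δ hδ => ?_
    obtain ⟨r₁, hr₁, hr₁'⟩ := exists_lt_of_lt_csSup (Hs_nonempty g b c hw₁)
      (sub_lt_self (hF g b c w₁) (half_pos hδ))
    obtain ⟨r₂, hr₂, hr₂'⟩ := exists_lt_of_lt_csSup (Hs_nonempty g b c hw₂)
      (sub_lt_self (hF g b c w₂) (half_pos hδ))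
    have := key r₁ hr₁ r₂ hr₂
    linarith

lemma hF_eq_zero_of_disjoint (g : G →L[ℝ] ℝ) (b : G) {c w : G} (hw : 0 ≤ w) (hc : 0 ≤ c)
    (hdisj : w ⊓ c = 0) : hF g b c w = 0 := by
  refine le_antisymm ?_ (hF_nonneg g b c hw)
  refine csSup_le (Hs_nonempty g b c hw) ?_
  rintro r ⟨v, hv, ⟨k, -, hkc⟩, rfl⟩
  have h0 : |v| ≤ 0 := by
    have h1 := le_inf hv hkc
    rwa [aux_disj_nsmul hw hc hdisj k] at h1
  have h2 : v = 0 :=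
    le_antisymm ((le_abs_self v).trans h0) (neg_nonpos.mp ((neg_le_abs v).trans h0))
  simp [h2]

/-- The extension of `hF` to a functional on all of `G`. -/
noncomputable def psiFun (g : G →L[ℝ] ℝ) (b c : G) (y : G) : ℝ :=
  hF g b c (y⁺) - hF g b c (y⁻)

lemma psiFun_add (g : G →L[ℝ] ℝ) (b c : G) (y z : G) :
    psiFun g b c (y + z) = psiFun g b c y + psiFun g b c z := by
  have key : (y + z)⁺ + (y⁻ + z⁻) = (y + z)⁻ + (y⁺ + z⁺) := by
    have h1 : (y + z)⁺ = (y + z) + (y + z)⁻ := eq_add_of_sub_eq (posPart_sub_negPart _)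
    have h2 : y⁺ = y + y⁻ := eq_add_of_sub_eq (posPart_sub_negPart _)
    have h3 : z⁺ = z + z⁻ := eq_add_of_sub_eq (posPart_sub_negPart _)
    rw [h1, h2, h3]; abel
  have e1 : hF g b c ((y + z)⁺ + (y⁻ + z⁻))
      = hF g b c ((y + z)⁺) + (hF g b c (y⁻) + hF g b c (z⁻)) := by
    rw [hF_add g b c (posPart_nonneg _) (add_nonneg (negPart_nonneg _) (negPart_nonneg _)),
      hF_add g b c (negPart_nonneg _) (negPart_nonneg _)]
  have e2 : hF g b c ((y + z)⁻ + (y⁺ + z⁺))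
      = hF g b c ((y + z)⁻) + (hF g b c (y⁺) + hF g b c (z⁺)) := by
    rw [hF_add g b c (negPart_nonneg _) (add_nonneg (posPart_nonneg _) (posPart_nonneg _)),
      hF_add g b c (posPart_nonneg _) (posPart_nonneg _)]
  rw [key, e2] at e1
  unfold psiFun
  linarith

lemma psiFun_abs_le (g : G →L[ℝ] ℝ) (b c : G) (y : G) :
    |psiFun g b c y| ≤ (2 * ‖g‖) * ‖y‖ := by
  have hp : ‖y⁺‖ ≤ ‖y‖ := norm_le_norm_of_abs_le_abs (by
    rw [abs_of_nonneg (posPart_nonneg y)]; exact aux_posPart_le_abs y)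
  have hn : ‖y⁻‖ ≤ ‖y‖ := norm_le_norm_of_abs_le_abs (by
    rw [abs_of_nonneg (negPart_nonneg y)]; exact aux_negPart_le_abs y)
  have h1 : hF g b c (y⁺) ≤ ‖g‖ * ‖y‖ :=
    (hF_le g b c (posPart_nonneg y)).trans (mul_le_mul_of_nonneg_left hp (norm_nonneg g))
  have h2 : hF g b c (y⁻) ≤ ‖g‖ * ‖y‖ :=
    (hF_le g b c (negPart_nonneg y)).trans (mul_le_mul_of_nonneg_left hn (norm_nonneg g))
  have h3 : 0 ≤ hF g b c (y⁺) := hF_nonneg g b c (posPart_nonneg y)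
  have h4 : 0 ≤ hF g b c (y⁻) := hF_nonneg g b c (negPart_nonneg y)
  unfold psiFun
  rw [abs_le]
  constructor <;> nlinarith [norm_nonneg y, norm_nonneg g]

/-- `psiFun` as a continuous linear map. -/
noncomputable def psiCLM (g : G →L[ℝ] ℝ) (b c : G) : G →L[ℝ] ℝ :=
  (AddMonoidHom.mk' (psiFun g b c) (psiFun_add g b c)).toRealLinearMap
    ((AddMonoidHomClass.lipschitz_of_bound (AddMonoidHom.mk' (psiFun g b c) (psiFun_add g b c))
      (2 * ‖g‖) (fun y => by
        rw [Real.norm_eq_abs]; exact psiFun_abs_le g b c y)).continuous)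

@[simp] lemma psiCLM_apply (g : G →L[ℝ] ℝ) (b c : G) (y : G) :
    psiCLM g b c y = hF g b c (y⁺) - hF g b c (y⁻) := rfl

end HFun

/-! ### Singleton sets are limited -/

lemma isLimitedSet_singleton {X : Type*} [NormedAddCommGroup X] [NormedSpace ℝ X] (x : X) :
    IsLimitedSet ({x} : Set X) := by
  refine ⟨Bornology.isBounded_singleton, fun f hf ε hε => ?_⟩
  obtain ⟨N, hN⟩ := Metric.tendsto_atTop.mp (hf x) ε hε
  refine ⟨N, fun n hn a ha => ?_⟩
  rcases ha with rfl
  have h1 := hN n hn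
  rw [Real.dist_eq, sub_zero] at h1
  exact h1.le

/-- Domination for limitedly L-weakly compact operators: if `±S ≤ T` and `T` is l-Lwc,
then `S` is l-Lwc. -/
theorem lLwc_domination
    {E : Type*} [NormedAddCommGroup E] [Lattice E] [HasSolidNorm E] [IsOrderedAddMonoid E] [NormedSpace ℝ E] [CompleteSpace E]
    {F : Type*} [NormedAddCommGroup F] [Lattice F] [HasSolidNorm F] [IsOrderedAddMonoid F] [NormedSpace ℝ F] [CompleteSpace F]
    (S T : E →L[ℝ] F) (h₁ : OpLE S T) (h₂ : OpLE (-S) T)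
    (hT : ∀ A : Set E, IsLimitedSet A → IsLwcSet (T '' A)) :
    ∀ A : Set E, IsLimitedSet A → IsLwcSet (S '' A) := by
  -- basic positivity facts
  have h₁' : ∀ e : E, 0 ≤ e → 0 ≤ T e - S e := fun e he => by
    simpa [ContinuousLinearMap.sub_apply] using h₁ e he
  have h₂' : ∀ e : E, 0 ≤ e → 0 ≤ T e + S e := fun e he => by
    simpa [ContinuousLinearMap.sub_apply, sub_neg_eq_add] using h₂ e he
  have hTpos : ∀ e : E, 0 ≤ e → 0 ≤ T e := by
    intro e he
    refine aux_half_nonneg ?_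
    calc (0 : F) ≤ (T e - S e) + (T e + S e) := add_nonneg (h₁' e he) (h₂' e he)
    _ = T e + T e := by abel
  have habsS : ∀ e : E, |S e| ≤ T |e| := by
    intro e
    have hp := posPart_nonneg e
    have hn := negPart_nonneg e
    have hT1 : T |e| = T (e⁺) + T (e⁻) := by
      rw [← map_add]; congr 1; exact (posPart_add_negPart e).symm
    have hS1 : S e = S (e⁺) - S (e⁻) := by
      rw [← map_sub]; congr 1; exact (posPart_sub_negPart e).symm
    refine abs_le'.mpr ⟨?_, ?_⟩
    · -- S e ≤ T |e|
      have h3 : 0 ≤ (T (e⁺) - S (e⁺)) + (T (e⁻) + S (e⁻)) :=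
        add_nonneg (h₁' _ hp) (h₂' _ hn)
      have heq : (T (e⁺) - S (e⁺)) + (T (e⁻) + S (e⁻)) = T |e| - S e := by
        rw [hT1, hS1]; abel
      rw [heq] at h3
      exact sub_nonneg.mp h3
    · -- -(S e) ≤ T |e|
      have h3 : 0 ≤ (T (e⁺) + S (e⁺)) + (T (e⁻) - S (e⁻)) :=
        add_nonneg (h₂' _ hp) (h₁' _ hn)
      have heq : (T (e⁺) + S (e⁺)) + (T (e⁻) - S (e⁻)) = T |e| + S e := by
        rw [hT1, hS1]; abel
      rw [heq] at h3
      have h4 : (0 : F) ≤ T |e| - -(S e) := by rwa [sub_neg_eq_add]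
      exact sub_nonneg.mp h4
  intro A hA
  refine ⟨S.lipschitz.isBounded_image hA.1, ?_⟩
  intro x hxA hxdisj
  by_contra hnot
  -- extract a subsequence with norms bounded below
  obtain ⟨ε, hε, hfreq⟩ : ∃ ε > (0 : ℝ), ∃ᶠ n in atTop, ε ≤ ‖x n‖ := by
    rw [Metric.tendsto_atTop] at hnot
    push_neg at hnot
    obtain ⟨ε, hε, hN⟩ := hnot
    refine ⟨ε, hε, frequently_atTop.mpr fun N => ?_⟩
    obtain ⟨n, hn, h⟩ := hN N
    exact ⟨n, hn, by simpa [Real.dist_eq, abs_of_nonneg (norm_nonneg _)] using h⟩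
  obtain ⟨σ, hσ, hσε⟩ := extraction_of_frequently_atTop hfreq
  set y : ℕ → F := fun n => x (σ n) with hy_def
  have hy_norm : ∀ n, ε ≤ ‖y n‖ := hσε
  have hy_ne : ∀ n, y n ≠ 0 := by
    intro n h
    have := hy_norm n
    rw [h, norm_zero] at this
    linarith
  have hy_disj : ∀ n m, n ≠ m → |y n| ⊓ |y m| = 0 := fun n m h =>
    hxdisj _ _ (fun hh => h (hσ.injective hh))
  have hmemA : ∀ n, ∃ aa ∈ A, |y n| ≤ |S aa| := by
    intro n
    obtain ⟨s, ⟨aa, haa, rfl⟩, hle⟩ := hxA (σ n)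
    exact ⟨aa, haa, hle⟩
  choose a haA hyS using hmemA
  choose g hg1 hgy using fun n => exists_dual_vector ℝ (y n) (norm_ne_zero_iff.mpr (hy_ne n))
  have hgy' : ∀ n, g n (y n) = ‖y n‖ := by
    intro n
    have := hgy n
    simpa using this
  set u : ℕ → F := fun n => (S (a n))⁺ with hu_def
  set v : ℕ → F := fun n => (S (a n))⁻ with hv_def
  set Φ : ℕ → E →L[ℝ] ℝ := fun n =>
    ((psiCLM (g n) |y n| (u n)).comp S) - ((psiCLM (g n) |y n| (v n)).comp S) with hΦ_def
  -- weak* nullity of Φ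
  have hwnull : ∀ e : E, Tendsto (fun n => Φ n e) atTop (𝓝 0) := by
    intro e
    have hTe : (0 : F) ≤ T |e| := hTpos _ (abs_nonneg e)
    -- the dominating sequence
    set c : ℕ → ℝ := fun n => sSup (Set.range fun k : ℕ => ‖T |e| ⊓ (k • |y n|)‖) with hc_def
    have hz_nonneg : ∀ n (k : ℕ), (0 : F) ≤ T |e| ⊓ (k • |y n|) :=
      fun n k => le_inf hTe (nsmul_nonneg (abs_nonneg _) k)
    have hz_le : ∀ n (k : ℕ), ‖T |e| ⊓ (k • |y n|)‖ ≤ ‖T |e|‖ := by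
      intro n k
      refine norm_le_norm_of_abs_le_abs ?_
      rw [abs_of_nonneg (hz_nonneg n k), abs_of_nonneg hTe]
      exact inf_le_left
    have hc_bdd : ∀ n, BddAbove (Set.range fun k : ℕ => ‖T |e| ⊓ (k • |y n|)‖) :=
      fun n => ⟨‖T |e|‖, by rintro r ⟨k, rfl⟩; exact hz_le n k⟩
    have hc_nonneg : ∀ n, 0 ≤ c n := by
      intro n
      refine le_csSup (hc_bdd n) ⟨0, ?_⟩
      show ‖T |e| ⊓ ((0 : ℕ) • |y n|)‖ = 0
      rw [zero_nsmul, inf_eq_right.mpr hTe, norm_zero]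
    -- hF bounds via c
    have hhF_le_c : ∀ n (c' : F) (w : F), 0 ≤ w → w ≤ |S e| → hF (g n) |y n| c' w ≤ c n := by
      intro n c' w hw hwle
      refine csSup_le (Hs_nonempty _ _ _ hw) ?_
      rintro r ⟨v', hv', ⟨k, hkb, -⟩, rfl⟩
      have h1 : |v'| ≤ T |e| ⊓ (k • |y n|) :=
        le_inf (hv'.trans (hwle.trans (habsS e))) hkb
      have h2 : ‖v'‖ ≤ ‖T |e| ⊓ (k • |y n|)‖ :=
        norm_le_norm_of_abs_le_abs (by rwa [abs_of_nonneg (hz_nonneg n k)])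
      calc g n v' ≤ |g n v'| := le_abs_self _
      _ = ‖g n v'‖ := (Real.norm_eq_abs _).symm
      _ ≤ ‖g n‖ * ‖v'‖ := (g n).le_opNorm v'
      _ = ‖v'‖ := by rw [hg1 n, one_mul]
      _ ≤ ‖T |e| ⊓ (k • |y n|)‖ := h2
      _ ≤ c n := le_csSup (hc_bdd n) ⟨k, rfl⟩
    have hΦ_le : ∀ n, |Φ n e| ≤ 4 * c n := by
      intro n
      have hb1 : |psiCLM (g n) |y n| (u n) (S e)| ≤ 2 * c n := by
        rw [psiCLM_apply]
        have e1 := hhF_le_c n (u n) ((S e)⁺) (posPart_nonneg _) (aux_posPart_le_abs _)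
        have e2 := hhF_le_c n (u n) ((S e)⁻) (negPart_nonneg _) (aux_negPart_le_abs _)
        have e3 := hF_nonneg (g n) |y n| (u n) (posPart_nonneg (S e))
        have e4 := hF_nonneg (g n) |y n| (u n) (negPart_nonneg (S e))
        rw [abs_le]; constructor <;> linarith
      have hb2 : |psiCLM (g n) |y n| (v n) (S e)| ≤ 2 * c n := by
        rw [psiCLM_apply]
        have e1 := hhF_le_c n (v n) ((S e)⁺) (posPart_nonneg _) (aux_posPart_le_abs _)
        have e2 := hhF_le_c n (v n) ((S e)⁻) (negPart_nonneg _) (aux_negPart_le_abs _)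
        have e3 := hF_nonneg (g n) |y n| (v n) (posPart_nonneg (S e))
        have e4 := hF_nonneg (g n) |y n| (v n) (negPart_nonneg (S e))
        rw [abs_le]; constructor <;> linarith
      have hΦe : Φ n e = psiCLM (g n) |y n| (u n) (S e) - psiCLM (g n) |y n| (v n) (S e) := by
        simp [hΦ_def]
      rw [hΦe]
      calc |psiCLM (g n) |y n| (u n) (S e) - psiCLM (g n) |y n| (v n) (S e)|
          ≤ |psiCLM (g n) |y n| (u n) (S e)| + |psiCLM (g n) |y n| (v n) (S e)| := abs_sub _ _
      _ ≤ 4 * c n := by linarith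
    -- c tends to zero via Lwc of T '' {|e|}
    have hc_tendsto : Tendsto c atTop (𝓝 0) := by
      have hchoice : ∀ n, ∃ k : ℕ, c n - 1 / (n + 1) < ‖T |e| ⊓ (k • |y n|)‖ := by
        intro n
        obtain ⟨r, ⟨k, rfl⟩, hlt⟩ := exists_lt_of_lt_csSup
          (Set.range_nonempty _)
          (show c n - 1 / ((n : ℝ) + 1) < c n from sub_lt_self _ (by positivity))
        exact ⟨k, hlt⟩
      choose k hk using hchoice
      set w : ℕ → F := fun n => T |e| ⊓ (k n • |y n|) with hw_def
      have hw_mem : ∀ n, w n ∈ solHull (T '' ({|e|} : Set E)) := by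
        intro n
        refine ⟨T |e|, ⟨|e|, rfl, rfl⟩, ?_⟩
        rw [abs_of_nonneg (hz_nonneg n (k n)), abs_of_nonneg hTe]
        exact inf_le_left
      have hw_disj : ∀ n m, n ≠ m → |w n| ⊓ |w m| = 0 := by
        intro n m hnm
        rw [abs_of_nonneg (hz_nonneg n (k n)), abs_of_nonneg (hz_nonneg m (k m))]
        refine le_antisymm ?_ (le_inf (hz_nonneg n (k n)) (hz_nonneg m (k m)))
        calc w n ⊓ w m ≤ (k n • |y n|) ⊓ (k m • |y m|) := inf_le_inf inf_le_right inf_le_right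
        _ = 0 := aux_disj_nsmul_nsmul (abs_nonneg _) (abs_nonneg _) (hy_disj n m hnm) _ _
      have hwnorm := (hT _ (isLimitedSet_singleton |e|)).2 w hw_mem hw_disj
      have hsq : ∀ n, c n ≤ ‖w n‖ + 1 / (n + 1) := fun n => by
        have := hk n; linarith
      refine squeeze_zero hc_nonneg hsq ?_
      have := hwnorm.add tendsto_one_div_add_atTop_nhds_zero_nat
      simpa using this
    refine squeeze_zero_norm (fun n => ?_) (by simpa using hc_tendsto.const_mul 4)
    rw [Real.norm_eq_abs]
    exact hΦ_le n
  -- largeness of Φ n (a n)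
  have hlarge : ∀ n, ε ≤ Φ n (a n) := by
    intro n
    have huv : u n ⊓ v n = 0 := posPart_inf_negPart_eq_zero (S (a n))
    have hu0 : (0 : F) ≤ u n := posPart_nonneg _
    have hv0 : (0 : F) ≤ v n := negPart_nonneg _
    have hy_le : |y n| ≤ u n + v n := (hyS n).trans_eq (posPart_add_negPart (S (a n))).symm
    obtain ⟨p, hp1, hp2, hq1, hq2⟩ := aux_riesz hu0 hv0 hy_le
    -- hF (g n) |y n| (u n) at (S (a n))⁻ vanishes; similarly the other
    have hz1 : hF (g n) |y n| (u n) (v n) = 0 :=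
      hF_eq_zero_of_disjoint _ _ hv0 hu0 (by rw [inf_comm]; exact huv)
    have hz2 : hF (g n) |y n| (v n) (u n) = 0 :=
      hF_eq_zero_of_disjoint _ _ hu0 hv0 huv
    have hgp : g n p ≤ hF (g n) |y n| (u n) (u n) := by
      refine le_hF _ _ _ hu0 ⟨p, hp1, ⟨1, ?_, ?_⟩, rfl⟩
      · simpa using hp2
      · simpa using hp1
    have hgq : g n (y n - p) ≤ hF (g n) |y n| (v n) (v n) := by
      refine le_hF _ _ _ hv0 ⟨y n - p, hq1, ⟨2, ?_, ?_⟩, rfl⟩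
      · calc |y n - p| ≤ |y n| + |y n| := hq2
        _ = 2 • |y n| := (two_nsmul _).symm
      · calc |y n - p| ≤ v n := hq1
        _ ≤ v n + v n := le_add_of_nonneg_left hv0
        _ = 2 • v n := (two_nsmul _).symm
    have hsum : ‖y n‖ = g n p + g n (y n - p) := by
      rw [← map_add]
      rw [show p + (y n - p) = y n by abel]
      exact (hgy' n).symm
    have hΦa : Φ n (a n) = hF (g n) |y n| (u n) (u n) + hF (g n) |y n| (v n) (v n) := by
      have hps : (S (a n))⁺ = u n := rfl
      have hns : (S (a n))⁻ = v n := rfl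
      simp only [hΦ_def, ContinuousLinearMap.sub_apply, ContinuousLinearMap.comp_apply,
        psiCLM_apply, hps, hns, hz1, hz2]
      ring
    rw [hΦa]
    calc ε ≤ ‖y n‖ := hy_norm n
    _ = g n p + g n (y n - p) := hsum
    _ ≤ _ := add_le_add hgp hgq
  -- contradiction via limitedness of A
  obtain ⟨N, hN⟩ := hA.2 Φ hwnull (ε / 2) (by linarith)
  have h1 := hN N le_rfl (a N) (haA N)
  have h2 := hlarge N
  have h3 : Φ N (a N) ≤ ε / 2 := (le_abs_self _).trans h1
  linarith
end

section
/- Let E and F be Banach lattices and let S, T : E → F be bounded linear operators with ±S ≤ T (i.e. S ≤ T and −S ≤ T in the operator order). If T is limitedly M-weakly compact, then S is limitedly M-weakly compact. -/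
open Filter Topology

section Modulus

variable {F : Type*} [NormedAddCommGroup F] [Lattice F] [HasSolidNorm F]
    [IsOrderedAddMonoid F] [NormedSpace ℝ F]

/-- The set whose sup defines the positive part of `g` at `y`. -/
def qSet (g : F →L[ℝ] ℝ) (y : F) : Set ℝ := g '' {z | 0 ≤ z ∧ z ≤ y}

noncomputable def qFun (g : F →L[ℝ] ℝ) (y : F) : ℝ := sSup (qSet g y)

lemma qSet_nonempty (g : F →L[ℝ] ℝ) {y : F} (hy : 0 ≤ y) : (qSet g y).Nonempty :=
  ⟨g 0, ⟨0, ⟨le_rfl, hy⟩, rfl⟩⟩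

lemma norm_le_of_nonneg_le (g : F →L[ℝ] ℝ) {z y : F} (hz0 : 0 ≤ z) (hzy : z ≤ y) :
    g z ≤ ‖g‖ * ‖y‖ := by
  have hzn : ‖z‖ ≤ ‖y‖ := by
    refine HasSolidNorm.solid ?_
    rw [abs_of_nonneg hz0]
    exact hzy.trans (le_abs_self y)
  calc g z ≤ |g z| := le_abs_self _
    _ ≤ ‖g‖ * ‖z‖ := g.le_opNorm z
    _ ≤ ‖g‖ * ‖y‖ := mul_le_mul_of_nonneg_left hzn (norm_nonneg g)

lemma qSet_bddAbove (g : F →L[ℝ] ℝ) (y : F) : BddAbove (qSet g y) := by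
  refine ⟨‖g‖ * ‖y‖, ?_⟩
  rintro r ⟨z, ⟨hz0, hzy⟩, rfl⟩
  exact norm_le_of_nonneg_le g hz0 hzy

lemma le_qFun (g : F →L[ℝ] ℝ) {y z : F} (hz0 : 0 ≤ z) (hzy : z ≤ y) : g z ≤ qFun g y :=
  le_csSup (qSet_bddAbove g y) ⟨z, ⟨hz0, hzy⟩, rfl⟩

lemma qFun_nonneg (g : F →L[ℝ] ℝ) {y : F} (hy : 0 ≤ y) : 0 ≤ qFun g y := by
  have := le_qFun g (le_rfl) hy
  simpa using this

lemma qFun_le (g : F →L[ℝ] ℝ) {y : F} (hy : 0 ≤ y) : qFun g y ≤ ‖g‖ * ‖y‖ := by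
  refine csSup_le (qSet_nonempty g hy) ?_
  rintro r ⟨z, ⟨hz0, hzy⟩, rfl⟩
  exact norm_le_of_nonneg_le g hz0 hzy

lemma qFun_add (g : F →L[ℝ] ℝ) {a b : F} (ha : 0 ≤ a) (hb : 0 ≤ b) :
    qFun g (a + b) = qFun g a + qFun g b := by
  apply le_antisymm
  · refine csSup_le (qSet_nonempty g (by positivity)) ?_
    rintro r ⟨z, ⟨hz0, hzab⟩, rfl⟩
    set z₁ := z ⊓ a with hz₁
    have hz₁0 : 0 ≤ z₁ := le_inf hz0 ha
    have hz₁a : z₁ ≤ a := inf_le_right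
    have hz₂0 : 0 ≤ z - z₁ := by
      simp only [sub_nonneg, hz₁]
      exact inf_le_left
    have hz₂b : z - z₁ ≤ b := by
      rw [sub_le_comm, hz₁]
      exact le_inf (sub_le_self z hb) (by rw [sub_le_iff_le_add]; exact hzab)
    have hsplit : g z = g z₁ + g (z - z₁) := by rw [← map_add, add_sub_cancel]
    rw [hsplit]
    exact add_le_add (le_qFun g hz₁0 hz₁a) (le_qFun g hz₂0 hz₂b)
  · have h : ∀ r ∈ qSet g a, r + qFun g b ≤ qFun g (a + b) := by
      rintro r ⟨z₁, ⟨h10, h1a⟩, rfl⟩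
      rw [← le_sub_iff_add_le']
      refine csSup_le (qSet_nonempty g hb) ?_
      rintro s ⟨z₂, ⟨h20, h2b⟩, rfl⟩
      rw [le_sub_iff_add_le', ← map_add]
      exact le_qFun g (add_nonneg h10 h20) (add_le_add h1a h2b)
    have h2 : qFun g a ≤ qFun g (a + b) - qFun g b :=
      csSup_le (qSet_nonempty g ha) fun r hr => by linarith [h r hr]
    linarith

/-- The positive part of `g`, as a bare function. -/
noncomputable def plusFun (g : F →L[ℝ] ℝ) (y : F) : ℝ := qFun g y⁺ - qFun g y⁻

lemma plusFun_add (g : F →L[ℝ] ℝ) (y w : F) :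
    plusFun g (y + w) = plusFun g y + plusFun g w := by
  have key : (y + w)⁺ + (y⁻ + w⁻) = (y + w)⁻ + (y⁺ + w⁺) := by
    have h1 : (y + w)⁺ - (y + w)⁻ = y + w := posPart_sub_negPart _
    have h2 : y⁺ - y⁻ = y := posPart_sub_negPart _
    have h3 : w⁺ - w⁻ = w := posPart_sub_negPart _
    have : (y + w)⁺ - (y + w)⁻ = (y⁺ - y⁻) + (w⁺ - w⁻) := by rw [h1, h2, h3]
    have h := sub_eq_zero.mpr this
    rw [← sub_eq_zero]
    convert h using 1
    abel
  have e1 : qFun g ((y + w)⁺ + (y⁻ + w⁻)) = qFun g (y + w)⁺ + (qFun g y⁻ + qFun g w⁻) := by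
    rw [qFun_add g (posPart_nonneg _) (add_nonneg (negPart_nonneg _) (negPart_nonneg _)),
      qFun_add g (negPart_nonneg _) (negPart_nonneg _)]
  have e2 : qFun g ((y + w)⁻ + (y⁺ + w⁺)) = qFun g (y + w)⁻ + (qFun g y⁺ + qFun g w⁺) := by
    rw [qFun_add g (negPart_nonneg _) (add_nonneg (posPart_nonneg _) (posPart_nonneg _)),
      qFun_add g (posPart_nonneg _) (posPart_nonneg _)]
  have := key ▸ e1
  rw [e2] at this
  simp only [plusFun]
  linarith

lemma plusFun_bound (g : F →L[ℝ] ℝ) (y : F) : |plusFun g y| ≤ 2 * ‖g‖ * ‖y‖ := by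
  have h1 : 0 ≤ qFun g y⁺ := qFun_nonneg g (posPart_nonneg _)
  have h2 : 0 ≤ qFun g y⁻ := qFun_nonneg g (negPart_nonneg _)
  have h3 : qFun g y⁺ ≤ ‖g‖ * ‖y⁺‖ := qFun_le g (posPart_nonneg _)
  have h4 : qFun g y⁻ ≤ ‖g‖ * ‖y⁻‖ := qFun_le g (negPart_nonneg _)
  have hp : y⁺ ≤ |y| := by
    rw [← posPart_add_negPart y]; exact le_add_of_nonneg_right (negPart_nonneg _)
  have hn : y⁻ ≤ |y| := by
    rw [← posPart_add_negPart y]; exact le_add_of_nonneg_left (posPart_nonneg _)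
  have h5 : ‖y⁺‖ ≤ ‖y‖ := by
    refine HasSolidNorm.solid ?_
    rw [abs_of_nonneg (posPart_nonneg _)]; exact hp
  have h6 : ‖y⁻‖ ≤ ‖y‖ := by
    refine HasSolidNorm.solid ?_
    rw [abs_of_nonneg (negPart_nonneg _)]; exact hn
  have hg : 0 ≤ ‖g‖ := norm_nonneg g
  rw [abs_le]
  constructor <;> simp only [plusFun] <;> nlinarith

/-- The positive part of `g`, as a continuous linear map. -/
noncomputable def gPlus (g : F →L[ℝ] ℝ) : F →L[ℝ] ℝ :=
  AddMonoidHom.toRealLinearMap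
    { toFun := plusFun g
      map_zero' := by
        have := plusFun_add g 0 0
        simp only [add_zero] at this
        linarith
      map_add' := plusFun_add g }
    (by
      have hlip : LipschitzWith (Real.toNNReal (2 * ‖g‖)) (plusFun g) := by
        refine LipschitzWith.of_dist_le_mul fun a b => ?_
        have hdiff : plusFun g a - plusFun g b = plusFun g (a - b) := by
          have := plusFun_add g (a - b) b
          simp only [sub_add_cancel] at this
          linarith
        have := plusFun_bound g (a - b)
        rw [Real.dist_eq, dist_eq_norm, hdiff]
        rw [Real.coe_toNNReal _ (by positivity : (0:ℝ) ≤ 2 * ‖g‖)]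
        exact this
      exact hlip.continuous)


lemma gPlus_apply (g : F →L[ℝ] ℝ) (y : F) : gPlus g y = plusFun g y := rfl

lemma qFun_zero (g : F →L[ℝ] ℝ) : qFun g 0 = 0 := by
  have := qFun_add g (le_refl (0 : F)) (le_refl (0 : F))
  simp only [add_zero] at this
  linarith

lemma gPlus_of_nonneg (g : F →L[ℝ] ℝ) {y : F} (hy : 0 ≤ y) : gPlus g y = qFun g y := by
  rw [gPlus_apply, plusFun, posPart_eq_self.2 hy, negPart_eq_zero.2 hy, qFun_zero, sub_zero]

lemma gPlus_nonneg (g : F →L[ℝ] ℝ) {y : F} (hy : 0 ≤ y) : 0 ≤ gPlus g y := by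
  rw [gPlus_of_nonneg g hy]; exact qFun_nonneg g hy

lemma le_gPlus (g : F →L[ℝ] ℝ) {y : F} (hy : 0 ≤ y) : g y ≤ gPlus g y := by
  rw [gPlus_of_nonneg g hy]; exact le_qFun g hy le_rfl

lemma gPlus_mono (g : F →L[ℝ] ℝ) {u v : F} (hu : 0 ≤ u) (huv : u ≤ v) :
    gPlus g u ≤ gPlus g v := by
  have h := gPlus_nonneg g (sub_nonneg.2 huv)
  rw [map_sub] at h
  linarith

/-- The key domination inequality via the modulus `2 g⁺ - g`. -/
lemma abs_apply_le_modulus (g : F →L[ℝ] ℝ) {w z : F} (hwz : |w| ≤ z) :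
    |g w| ≤ ((2 : ℝ) • gPlus g - g) z := by
  have hz : 0 ≤ z := (abs_nonneg w).trans hwz
  have hwp : w⁺ ≤ z := by
    refine le_trans ?_ hwz
    rw [← posPart_add_negPart w]; exact le_add_of_nonneg_right (negPart_nonneg _)
  have hwn : w⁻ ≤ z := by
    refine le_trans ?_ hwz
    rw [← posPart_add_negPart w]; exact le_add_of_nonneg_left (posPart_nonneg _)
  have key : ∀ v : F, |v| ≤ z → g v ≤ ((2 : ℝ) • gPlus g - g) z := by
    intro v hv
    have hvp : v⁺ ≤ z := by
      refine le_trans ?_ hv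
      rw [← posPart_add_negPart v]; exact le_add_of_nonneg_right (negPart_nonneg _)
    have hvn : v⁻ ≤ z := by
      refine le_trans ?_ hv
      rw [← posPart_add_negPart v]; exact le_add_of_nonneg_left (posPart_nonneg _)
    have e : g v = g v⁺ - g v⁻ := by rw [← map_sub, posPart_sub_negPart]
    have h1 : g v⁺ ≤ gPlus g v⁺ := le_gPlus g (posPart_nonneg _)
    have h2 : -(g v⁻) ≤ gPlus g v⁻ - g v⁻ := by
      have := gPlus_nonneg g (negPart_nonneg v); linarith
    have h3 : gPlus g v⁺ ≤ gPlus g z := gPlus_mono g (posPart_nonneg _) hvp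
    have h4 : gPlus g v⁻ - g v⁻ ≤ gPlus g z - g z := by
      have h5 := gPlus_nonneg g (sub_nonneg.2 hvn)
      rw [map_sub] at h5
      have h6 := le_gPlus g (sub_nonneg.2 hvn)
      rw [map_sub, map_sub] at h6
      linarith
    simp only [ContinuousLinearMap.sub_apply, ContinuousLinearMap.smul_apply, smul_eq_mul]
    linarith
  rw [abs_le]
  constructor
  · have := key (-w) (by rwa [abs_neg])
    rw [map_neg] at this
    linarith
  · exact key w hwz

end Modulus

/-- Domination for limitedly M-weakly compact operators: if `±S ≤ T` and `T` is l-Mwc,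
then `S` is l-Mwc. -/
theorem lMwc_domination
    {E : Type*} [NormedAddCommGroup E] [Lattice E] [HasSolidNorm E]
    [IsOrderedAddMonoid E] [NormedSpace ℝ E] [CompleteSpace E]
    {F : Type*} [NormedAddCommGroup F] [Lattice F] [HasSolidNorm F]
    [IsOrderedAddMonoid F] [NormedSpace ℝ F] [CompleteSpace F]
    (S T : E →L[ℝ] F) (h₁ : OpLE S T) (h₂ : OpLE (-S) T)
    (hT : IsLMwcOp T) :
    IsLMwcOp S := by
  intro x hbdd hdisj g
  -- the positive and negative parts of the sequence
  set u : ℕ → E := fun n => (x n)⁺ with hu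
  set v : ℕ → E := fun n => (x n)⁻ with hv
  obtain ⟨C, hC⟩ := (isBounded_iff_forall_norm_le).1 hbdd
  have hxC : ∀ n, ‖x n‖ ≤ C := fun n => hC _ ⟨n, rfl⟩
  have hposle : ∀ n, u n ≤ |x n| := by
    intro n
    rw [hu, ← posPart_add_negPart (x n)]
    exact le_add_of_nonneg_right (negPart_nonneg _)
  have hnegle : ∀ n, v n ≤ |x n| := by
    intro n
    rw [hv, ← posPart_add_negPart (x n)]
    exact le_add_of_nonneg_left (posPart_nonneg _)
  have hbddu : Bornology.IsBounded (Set.range u) := by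
    rw [isBounded_iff_forall_norm_le]
    refine ⟨C, ?_⟩
    rintro _ ⟨n, rfl⟩
    refine le_trans (HasSolidNorm.solid ?_) (hxC n)
    rw [abs_of_nonneg (posPart_nonneg _)]
    exact hposle n
  have hbddv : Bornology.IsBounded (Set.range v) := by
    rw [isBounded_iff_forall_norm_le]
    refine ⟨C, ?_⟩
    rintro _ ⟨n, rfl⟩
    refine le_trans (HasSolidNorm.solid ?_) (hxC n)
    rw [abs_of_nonneg (negPart_nonneg _)]
    exact hnegle n
  have hdisju : ∀ n m, n ≠ m → |u n| ⊓ |u m| = 0 := by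
    intro n m hnm
    rw [abs_of_nonneg (posPart_nonneg _), abs_of_nonneg (posPart_nonneg _)]
    refine le_antisymm ?_ (le_inf (posPart_nonneg _) (posPart_nonneg _))
    calc u n ⊓ u m ≤ |x n| ⊓ |x m| := inf_le_inf (hposle n) (hposle m)
      _ = 0 := hdisj n m hnm
  have hdisjv : ∀ n m, n ≠ m → |v n| ⊓ |v m| = 0 := by
    intro n m hnm
    rw [abs_of_nonneg (negPart_nonneg _), abs_of_nonneg (negPart_nonneg _)]
    refine le_antisymm ?_ (le_inf (negPart_nonneg _) (negPart_nonneg _))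
    calc v n ⊓ v m ≤ |x n| ⊓ |x m| := inf_le_inf (hnegle n) (hnegle m)
      _ = 0 := hdisj n m hnm
  -- the modulus functional
  set G : F →L[ℝ] ℝ := (2 : ℝ) • gPlus g - g with hG
  have hTu := hT u hbddu hdisju G
  have hTv := hT v hbddv hdisjv G
  -- |S y| ≤ T y for 0 ≤ y
  have habsS : ∀ y : E, 0 ≤ y → |S y| ≤ T y := by
    intro y hy
    have ha := h₁ y hy
    have hb := h₂ y hy
    rw [ContinuousLinearMap.sub_apply] at ha hb
    rw [ContinuousLinearMap.neg_apply] at hb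
    rw [abs_le']
    constructor
    · rwa [sub_nonneg] at ha
    · rw [sub_neg_eq_add] at hb
      rw [neg_le_iff_add_nonneg, add_comm]
      rwa [add_comm] at hb
  have hbound : ∀ n, ‖g (S (x n))‖ ≤ G (T (u n)) + G (T (v n)) := by
    intro n
    have hx : x n = u n - v n := (posPart_sub_negPart (x n)).symm
    have e : g (S (x n)) = g (S (u n)) - g (S (v n)) := by
      rw [hx, map_sub, map_sub]
    have b1 : |g (S (u n))| ≤ G (T (u n)) :=
      abs_apply_le_modulus g (habsS (u n) (posPart_nonneg _))
    have b2 : |g (S (v n))| ≤ G (T (v n)) :=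
      abs_apply_le_modulus g (habsS (v n) (negPart_nonneg _))
    rw [Real.norm_eq_abs, e]
    calc |g (S (u n)) - g (S (v n))| ≤ |g (S (u n))| + |g (S (v n))| := abs_sub _ _
      _ ≤ G (T (u n)) + G (T (v n)) := add_le_add b1 b2
  have hsum : Tendsto (fun n => G (T (u n)) + G (T (v n))) atTop (𝓝 0) := by
    simpa using hTu.add hTv
  exact squeeze_zero_norm hbound hsum
end
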